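/- Let s ≥ 1, let λ_1, …, λ_s be pairwise distinct real numbers and b_1, …, b_s complex numbers. If Σ_{j=1}^{s} b_j·e^{iλ_j t} tends to 0 as t → ∞ (t real), then b_j = 0 for every j. -/

import Mathlib

open MeasureTheory Metric Complex ComplexConjugate Finset
open scoped ENNReal

noncomputable section

/-- `ℂ^N` with its (product) Lebesgue measure; `EuclideanSpace ℂ (Fin N)` is definitionally
`Fin N → ℂ`. -/
instance (N : ℕ) : MeasureSpace (EuclideanSpace ℂ (Fin N)) where
  volume := (volume : Measure (Fin N → ℂ)).map (WithLp.toLp 2)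

variable {N : ℕ}

/-- Hermitian inner product `⟨z,w⟩ = Σ z_j conj(w_j)`. -/
def hinner (z w : EuclideanSpace ℂ (Fin N)) : ℂ := ∑ j, z j * conj (w j)

/-- Lebesgue measure on `ℂ^N` normalized so that the unit ball has measure 1. -/
def volB (N : ℕ) : Measure (EuclideanSpace ℂ (Fin N)) :=
  (volume (ball (0 : EuclideanSpace ℂ (Fin N)) 1))⁻¹ • volume

/-- The Berezin transform of `u`. -/
def berezin (u : EuclideanSpace ℂ (Fin N) → ℂ) (z : EuclideanSpace ℂ (Fin N)) : ℂ :=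
  (((1 - ‖z‖ ^ 2) ^ (N + 1) : ℝ) : ℂ) *
    ∫ ξ in ball (0 : EuclideanSpace ℂ (Fin N)) 1,
      u ξ / ((‖1 - hinner z ξ‖ ^ (2 * (N + 1)) : ℝ) : ℂ) ∂(volB N)

/-- Pluriharmonic on the unit ball: sum of a holomorphic and an anti-holomorphic function. -/
def Pluriharmonic (h : EuclideanSpace ℂ (Fin N) → ℂ) : Prop :=
  ∃ f g : EuclideanSpace ℂ (Fin N) → ℂ,
    DifferentiableOn ℂ f (ball 0 1) ∧ DifferentiableOn ℂ g (ball 0 1) ∧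
      ∀ z ∈ ball (0 : EuclideanSpace ℂ (Fin N)) 1, h z = f z + conj (g z)

/-- `B(u)` has finite rank: it is a finite sum `Σ f_j conj(g_j)` with `f_j, g_j` holomorphic. -/
def FiniteRankBerezin (u : EuclideanSpace ℂ (Fin N) → ℂ) : Prop :=
  ∃ (n : ℕ) (f g : Fin n → EuclideanSpace ℂ (Fin N) → ℂ),
    (∀ j, DifferentiableOn ℂ (f j) (ball 0 1)) ∧
    (∀ j, DifferentiableOn ℂ (g j) (ball 0 1)) ∧
    ∀ z ∈ ball (0 : EuclideanSpace ℂ (Fin N)) 1,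
      berezin u z = ∑ j, f j z * conj (g j z)

/-- Wirtinger derivative `∂/∂z_j`. -/
def wdz (j : Fin N) (f : EuclideanSpace ℂ (Fin N) → ℂ) (z : EuclideanSpace ℂ (Fin N)) : ℂ :=
  (1 / 2 : ℂ) * (fderiv ℝ f z (EuclideanSpace.single j 1)
    - Complex.I * fderiv ℝ f z (EuclideanSpace.single j Complex.I))

/-- Wirtinger derivative `∂/∂conj(z_j)`. -/
def wdzbar (j : Fin N) (f : EuclideanSpace ℂ (Fin N) → ℂ) (z : EuclideanSpace ℂ (Fin N)) : ℂ :=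
  (1 / 2 : ℂ) * (fderiv ℝ f z (EuclideanSpace.single j 1)
    + Complex.I * fderiv ℝ f z (EuclideanSpace.single j Complex.I))

/-- The radial operator `E = Σ z_j ∂/∂z_j`. -/
def Eop (f : EuclideanSpace ℂ (Fin N) → ℂ) (z : EuclideanSpace ℂ (Fin N)) : ℂ :=
  ∑ j, z j * wdz j f z

/-- The radial operator `Ē = Σ conj(z_j) ∂/∂conj(z_j)`. -/
def Ebarop (f : EuclideanSpace ℂ (Fin N) → ℂ) (z : EuclideanSpace ℂ (Fin N)) : ℂ :=
  ∑ j, conj (z j) * wdzbar j f z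

/-- The Laplacian `Δ = Σ ∂²/(∂z_j ∂conj(z_j))`. -/
def lapOp (f : EuclideanSpace ℂ (Fin N) → ℂ) (z : EuclideanSpace ℂ (Fin N)) : ℂ :=
  ∑ j, wdz j (wdzbar j f) z

/-- The operator `|E+s|² − Δ = (E+s)∘(Ē+s) − Δ`. -/
def stepOp (s : ℝ) (f : EuclideanSpace ℂ (Fin N) → ℂ) : EuclideanSpace ℂ (Fin N) → ℂ :=
  fun z => (Eop (fun w => Ebarop f w + (s : ℂ) * f w) z
      + (s : ℂ) * (Ebarop f z + (s : ℂ) * f z)) - lapOp f z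

/-- The composition `(|E+m|²−Δ)∘(|E+(m−1)|²−Δ)∘⋯∘(|E+0|²−Δ)`. -/
def iterOp : ℕ → (EuclideanSpace ℂ (Fin N) → ℂ) → (EuclideanSpace ℂ (Fin N) → ℂ)
  | 0 => stepOp 0
  | (m + 1) => fun f => stepOp (m + 1) (iterOp m f)

/-- The invariant Laplacian `Δ̃ = (1−|z|²)(Δ − |E|²)`. -/
def invLap (f : EuclideanSpace ℂ (Fin N) → ℂ) (z : EuclideanSpace ℂ (Fin N)) : ℂ :=
  (((1 - ‖z‖ ^ 2 : ℝ)) : ℂ) * (lapOp f z - Eop (Ebarop f) z)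

/-- The operator `c − Δ̃` (a single factor of `p_m(Δ̃)`). -/
def factorOp (c : ℂ) (f : EuclideanSpace ℂ (Fin N) → ℂ) : EuclideanSpace ℂ (Fin N) → ℂ :=
  fun z => c * f z - invLap f z

/-- The product of operators `∏_{j=0}^{m} (j(j−N) − Δ̃)`. -/
def prodOp (N : ℕ) : ℕ → (EuclideanSpace ℂ (Fin N) → ℂ) → (EuclideanSpace ℂ (Fin N) → ℂ)
  | 0 => factorOp ((0 : ℂ) * ((0 : ℂ) - (N : ℂ)))
  | (m + 1) => fun f => factorOp (((m : ℂ) + 1) * (((m : ℂ) + 1) - (N : ℂ))) (prodOp N m f)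

open Classical in
/-- The Möbius automorphism `φ_w` of the unit ball interchanging `0` and `w`. -/
def mobius (w z : EuclideanSpace ℂ (Fin N)) : EuclideanSpace ℂ (Fin N) :=
  ((1 - hinner z w)⁻¹ : ℂ) •
    (w - (if w = 0 then 0 else (hinner z w / hinner w w) • w)
      - ((Real.sqrt (1 - ‖w‖ ^ 2) : ℝ) : ℂ) •
        (z - (if w = 0 then 0 else (hinner z w / hinner w w) • w)))

lemma exp_sum_key (S : Finset ℝ) : ∀ (b : ℝ → ℂ),
    Filter.Tendsto (fun t : ℝ => ∑ x ∈ S, b x * Complex.exp (Complex.I * (x : ℂ) * (t : ℂ)))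
      Filter.atTop (nhds 0) → ∀ l ∈ S, b l = 0 := by
  induction S using Finset.strongInduction with
  | _ S ih =>
    intro b hb l hl
    set f : ℝ → ℂ := fun t => ∑ x ∈ S, b x * Complex.exp (Complex.I * (x : ℂ) * (t : ℂ)) with hf
    have hne : S.Nonempty := ⟨l, hl⟩
    set M : ℝ := S.sup' hne (fun x => |x - l|) with hM
    have hMnn : 0 ≤ M := le_trans (by simp) (Finset.le_sup' (fun x => |x - l|) hl)
    set h : ℝ := Real.pi / (M + 1) with hh
    have hpos : 0 < h := div_pos Real.pi_pos (by linarith)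
    -- non-vanishing of the factor
    have hfac : ∀ x ∈ S, x ≠ l →
        Complex.exp (Complex.I * x * h) - Complex.exp (Complex.I * l * h) ≠ 0 := by
      intro x hx hxl hcon
      rw [sub_eq_zero, Complex.exp_eq_exp_iff_exists_int] at hcon
      obtain ⟨n, hn⟩ := hcon
      have h2 : ((x * h : ℝ) : ℂ) * Complex.I = ((l * h + n * (2 * Real.pi) : ℝ) : ℂ) * Complex.I := by
        push_cast
        linear_combination hn
      have h3 : x * h = l * h + n * (2 * Real.pi) := by
        have := mul_right_cancel₀ Complex.I_ne_zero h2
        exact_mod_cast this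
      rcases eq_or_ne n 0 with rfl | hn0
      · apply hxl
        have : x * h = l * h := by simpa using h3
        exact mul_right_cancel₀ (ne_of_gt hpos) this
      · have h4 : |x - l| * h = |(n : ℝ)| * (2 * Real.pi) := by
          have : (x - l) * h = n * (2 * Real.pi) := by linarith
          calc |x - l| * h = |(x - l) * h| := by
                rw [abs_mul, abs_of_pos hpos]
            _ = |(n : ℝ) * (2 * Real.pi)| := by rw [this]
            _ = |(n : ℝ)| * (2 * Real.pi) := by
                rw [abs_mul, abs_of_pos (by positivity : (0:ℝ) < 2 * Real.pi)]
        have h5 : |x - l| ≤ M := Finset.le_sup' (fun x => |x - l|) hx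
        have h6 : |(n : ℝ)| ≥ 1 := by
          have : n ≠ 0 := hn0
          exact_mod_cast Int.one_le_abs (by simpa using hn0)
        have h7 : |x - l| * h ≤ M * (Real.pi / (M + 1)) := by
          apply mul_le_mul h5 le_rfl (le_of_lt hpos) hMnn
        have h8 : M * (Real.pi / (M + 1)) < Real.pi := by
          rw [mul_div_assoc' , div_lt_iff₀ (by linarith)]
          nlinarith [Real.pi_pos]
        nlinarith [Real.pi_pos]
    -- the differenced function
    set c : ℝ → ℂ := fun x => b x * (Complex.exp (Complex.I * x * h) - Complex.exp (Complex.I * l * h)) with hc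
    have hid : ∀ t : ℝ, f (t + h) - Complex.exp (Complex.I * l * h) * f t
        = ∑ x ∈ S.erase l, c x * Complex.exp (Complex.I * (x : ℂ) * (t : ℂ)) := by
      intro t
      rw [Finset.sum_erase _ (by simp [hc])]
      simp only [hf, Finset.mul_sum, ← Finset.sum_sub_distrib, hc]
      apply Finset.sum_congr rfl
      intro x hx
      have : Complex.I * (x : ℂ) * ((t + h : ℝ) : ℂ) = Complex.I * x * t + Complex.I * x * h := by
        push_cast; ring
      rw [this, Complex.exp_add]
      ring
    have htend : Filter.Tendsto
        (fun t : ℝ => ∑ x ∈ S.erase l, c x * Complex.exp (Complex.I * (x : ℂ) * (t : ℂ)))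
        Filter.atTop (nhds 0) := by
      have h1 : Filter.Tendsto (fun t : ℝ => f (t + h)) Filter.atTop (nhds 0) :=
        hb.comp (Filter.tendsto_atTop_add_const_right _ h Filter.tendsto_id)
      have h2 := h1.sub (hb.const_mul (Complex.exp (Complex.I * l * h)))
      simp only [mul_zero, sub_zero] at h2
      exact Filter.Tendsto.congr hid h2
    have hzero : ∀ x ∈ S.erase l, c x = 0 := ih (S.erase l) (Finset.erase_ssubset hl) c htend
    have hbx : ∀ x ∈ S, x ≠ l → b x = 0 := by
      intro x hx hxl
      have := hzero x (Finset.mem_erase.mpr ⟨hxl, hx⟩)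
      rcases mul_eq_zero.mp this with h | h
      · exact h
      · exact absurd h (hfac x hx hxl)
    -- conclude
    have hfl : ∀ t : ℝ, f t = b l * Complex.exp (Complex.I * (l : ℂ) * (t : ℂ)) := by
      intro t
      simp only [hf]
      rw [← Finset.add_sum_erase _ _ hl]
      rw [Finset.sum_eq_zero, add_zero]
      intro x hx
      rw [hbx x (Finset.mem_of_mem_erase hx) (Finset.ne_of_mem_erase hx), zero_mul]
    have hnorm : Filter.Tendsto (fun t : ℝ => ‖f t‖) Filter.atTop (nhds 0) := by
      simpa using hb.norm
    have hconst : ∀ t : ℝ, ‖f t‖ = ‖b l‖ := by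
      intro t
      rw [hfl t, norm_mul]
      have : ‖Complex.exp (Complex.I * (l : ℂ) * (t : ℂ))‖ = 1 := by
        rw [Complex.norm_exp]
        simp [Complex.exp_re]
      rw [this, mul_one]
    rw [← norm_eq_zero]
    exact tendsto_nhds_unique
      (Filter.Tendsto.congr (fun t => (hconst t).symm) tendsto_const_nhds) hnorm

/-- if a finite exponential sum `Σ b_j e^{iλ_j t}` with pairwise distinct real
frequencies tends to `0` as `t → ∞`, then all coefficients vanish. -/
theorem stmt4 {s : ℕ} (hs : 1 ≤ s) (lam : Fin s → ℝ) (hlam : Function.Injective lam)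
    (b : Fin s → ℂ)
    (h : Filter.Tendsto
      (fun t : ℝ => ∑ j, b j * Complex.exp (Complex.I * (lam j : ℂ) * (t : ℂ)))
      Filter.atTop (nhds 0)) :
    ∀ j, b j = 0 := by
  classical
  set B : ℝ → ℂ := fun x => if hx : ∃ j, lam j = x then b hx.choose else 0 with hB
  have hBj : ∀ j, B (lam j) = b j := by
    intro j
    have hx : ∃ j', lam j' = lam j := ⟨j, rfl⟩
    simp only [hB, dif_pos hx]
    congr 1
    exact hlam hx.choose_spec
  have hsum : ∀ t : ℝ,
      ∑ x ∈ Finset.image lam Finset.univ, B x * Complex.exp (Complex.I * (x : ℂ) * (t : ℂ))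
        = ∑ j, b j * Complex.exp (Complex.I * (lam j : ℂ) * (t : ℂ)) := by
    intro t
    rw [Finset.sum_image (fun a _ a' _ hh => hlam hh)]
    exact Finset.sum_congr rfl fun j _ => by rw [hBj]
  intro j
  have := exp_sum_key (Finset.image lam Finset.univ) B
    (by exact Filter.Tendsto.congr (fun t => (hsum t).symm) h)
    (lam j) (Finset.mem_image_of_mem lam (Finset.mem_univ j))
  rwa [hBj] at this

end
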